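/- Let r be a binary word of length n+1 containing both 00 and 11 as factors, and suppose the ordered pair (u,v) generates r, where u, v ∈ St(n,α) for some common slope α ∈ (0,1/2). Then (u,v) is uniquely determined by r: for every 0 ≤ k ≤ n−1, if r_k = r_{k+1} = 1 then u_k = v_k = 0, and otherwise u_k = r_{k+1} and v_k = r_k. In particular, r is generated by exactly one such pair. -/

import Mathlib

open scoped Classical

/-- Membership of `x` in the circular interval `[β,γ)`: it means `β ≤ x < γ`
when `β < γ`; `x ≥ β` or `x < γ` when `γ < β`; and never holds when `β = γ`. -/
def inCirc (β γ x : ℝ) : Prop :=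
  if β < γ then β ≤ x ∧ x < γ
  else if γ < β then β ≤ x ∨ x < γ
  else False

/-- The rotation word `r(α,β,γ,n)` as a list of booleans of length `n`:
its `i`-th letter is `1` iff the fractional part `{iα}` lies in `[β,γ)`. -/
noncomputable def rotWord (α β γ : ℝ) (n : ℕ) : List Bool :=
  (List.range n).map fun i => if inCirc β γ (Int.fract (i * α)) then true else false

/-- The set `R(n)` of all rotation words of length `n`. -/
def RotWords (n : ℕ) : Set (List Bool) :=
  {w | ∃ α ∈ Set.Ico (0:ℝ) 1, ∃ β ∈ Set.Ico (0:ℝ) 1, ∃ γ ∈ Set.Ico (0:ℝ) 1,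
    w = rotWord α β γ n}

/-- `numRot n = f(n)` is the number of binary rotation words of length `n`. -/
noncomputable def numRot (n : ℕ) : ℕ := (RotWords n).ncard

/-- The set `St(n,α)` of Sturmian words of length `n` and slope `α`:
rotation words `r(α,β,{β+α},n)`, `β ∈ [0,1)`. -/
def St (n : ℕ) (α : ℝ) : Set (List Bool) :=
  {w | ∃ β ∈ Set.Ico (0:ℝ) 1, w = rotWord α β (Int.fract (β + α)) n}

/-- The ordered pair `(u,v)` of words of length `n` generates the word `r` of
length `n+1`: regarding letters as integers, `r_{k+1} = r_k + u_k - v_k`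
for every `0 ≤ k ≤ n-1`. -/
def Generates (u v r : List Bool) : Prop :=
  ∀ k, k < u.length →
    ((r.getD (k+1) false).toNat : ℤ) =
      ((r.getD k false).toNat : ℤ) + ((u.getD k false).toNat : ℤ)
        - ((v.getD k false).toNat : ℤ)

/- ### Auxiliary lemmas -/

lemma aux_fract_Ico {x : ℝ} (h1 : 0 ≤ x) (h2 : x < 1) : Int.fract x = x :=
  Int.fract_eq_self.mpr ⟨h1, h2⟩

lemma aux_fract_neg {x : ℝ} (h1 : -1 ≤ x) (h2 : x < 0) : Int.fract x = x + 1 := by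
  have h := Int.fract_add_intCast x 1
  push_cast at h
  rw [← h]
  exact Int.fract_eq_self.mpr ⟨by linarith, by linarith⟩

lemma aux_fract_hi {x : ℝ} (h1 : 1 ≤ x) (h2 : x < 2) : Int.fract x = x - 1 := by
  have h := Int.fract_sub_intCast x 1
  push_cast at h
  rw [← h]
  exact Int.fract_eq_self.mpr ⟨by linarith, by linarith⟩

lemma aux_fract_shift (x y : ℝ) : Int.fract (x + y) = Int.fract (Int.fract x + y) := by
  have h2 : x + y = (Int.fract x + y) + (⌊x⌋ : ℤ) := by
    have := Int.floor_add_fract x; linarith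
  rw [h2, Int.fract_add_intCast]

lemma aux_fract_sub (x b c : ℝ) :
    Int.fract (x - c) = Int.fract (Int.fract (x - b) - Int.fract (c - b)) := by
  have h1 : x - c = ((x - b) - Int.fract (c - b)) - (⌊c - b⌋ : ℤ) := by
    have := Int.floor_add_fract (c - b); linarith
  rw [h1, Int.fract_sub_intCast, sub_eq_add_neg (x - b), aux_fract_shift, ← sub_eq_add_neg]

lemma aux_floor_ind (s θ : ℝ) (h0 : 0 ≤ θ) (h1 : θ < 1) :
    (⌊s⌋ - ⌊s - θ⌋ : ℤ) = if Int.fract s < θ then 1 else 0 := by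
  have hs : s - θ = (Int.fract s - θ) + ⌊s⌋ := by
    have := Int.floor_add_fract s; linarith
  rw [hs, Int.floor_add_intCast]
  have hf0 : 0 ≤ Int.fract s := Int.fract_nonneg s
  have hf1 : Int.fract s < 1 := Int.fract_lt_one s
  split
  · next h =>
      have : ⌊Int.fract s - θ⌋ = -1 := by
        rw [Int.floor_eq_iff]; push_cast; constructor <;> linarith
      omega
  · next h =>
      push_neg at h
      have : ⌊Int.fract s - θ⌋ = 0 := by
        rw [Int.floor_eq_iff] <;> push_cast <;> constructor <;> linarith
      omega

lemma aux_bind_pure_cast (l : List ℕ) :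
    (l >>= fun a => (pure ((a:ℝ)) : List ℝ)) = l.map (fun a : ℕ => (a:ℝ)) := by
  induction l with
  | nil => rfl
  | cons x xs ih =>
      rw [List.map_cons, ← ih]
      rfl

lemma rotWord_eq (α β γ : ℝ) (n : ℕ) :
    rotWord α β γ n = (List.range n).map
      (fun i : ℕ => if inCirc β γ (Int.fract ((i:ℝ) * α)) then true else false) := by
  rw [rotWord, aux_bind_pure_cast, List.map_map]
  rfl

lemma rotWord_length (α β γ : ℝ) (n : ℕ) : (rotWord α β γ n).length = n := by
  rw [rotWord_eq, List.length_map, List.length_range]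

lemma rotWord_getD (α β γ : ℝ) {n k : ℕ} (hk : k < n) :
    (rotWord α β γ n).getD k false
      = if inCirc β γ (Int.fract ((k:ℝ) * α)) then true else false := by
  rw [rotWord_eq, List.getD_eq_getElem _ _ (by rw [List.length_map, List.length_range]; exact hk),
    List.getElem_map, List.getElem_range]

lemma inCirc_iff {α β : ℝ} (hα0 : 0 < α) (hα1 : α < 1) (hβ0 : 0 ≤ β) (hβ1 : β < 1)
    {x : ℝ} (hx0 : 0 ≤ x) (hx1 : x < 1) :
    inCirc β (Int.fract (β + α)) x ↔ Int.fract (x - β) < α := by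
  unfold inCirc
  rcases lt_trichotomy (β + α) 1 with h | h | h
  · rw [aux_fract_Ico (by linarith) (by linarith), if_pos (by linarith)]
    constructor
    · rintro ⟨h1, h2⟩
      rw [aux_fract_Ico (by linarith) (by linarith)]; linarith
    · intro hlt
      rcases le_or_gt β x with hbx | hbx
      · rw [aux_fract_Ico (by linarith) (by linarith)] at hlt; exact ⟨hbx, by linarith⟩
      · rw [aux_fract_neg (by linarith) (by linarith)] at hlt; exact absurd hlt (by linarith)
  · have hf : Int.fract (β + α) = 0 := by rw [h, Int.fract_one]
    rw [hf, if_neg (by linarith), if_pos (by linarith)]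
    constructor
    · rintro (h1 | h1)
      · rw [aux_fract_Ico (by linarith) (by linarith)]; linarith
      · exact absurd h1 (by linarith)
    · intro hlt
      rcases le_or_gt β x with hbx | hbx
      · exact Or.inl hbx
      · rw [aux_fract_neg (by linarith) (by linarith)] at hlt; exact absurd hlt (by linarith)
  · have hf : Int.fract (β + α) = β + α - 1 := aux_fract_hi (by linarith) (by linarith)
    rw [hf, if_neg (by linarith), if_pos (by linarith)]
    constructor
    · rintro (h1 | h1)
      · rw [aux_fract_Ico (by linarith) (by linarith)]; linarith
      · rw [aux_fract_neg (by linarith) (by linarith)]; linarith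
    · intro hlt
      rcases le_or_gt β x with hbx | hbx
      · exact Or.inl hbx
      · rw [aux_fract_neg (by linarith) (by linarith)] at hlt; right; linarith

lemma st_length {n : ℕ} {α : ℝ} {w : List Bool} (hw : w ∈ St n α) : w.length = n := by
  obtain ⟨β, hβ, rfl⟩ := hw
  exact rotWord_length _ _ _ _

lemma st_spec {n : ℕ} {α : ℝ} (hα0 : 0 < α) (hα1 : α < 1) {w : List Bool} (hw : w ∈ St n α) :
    ∃ b, 0 ≤ b ∧ b < 1 ∧
      ∀ k, k < n → (w.getD k false = true ↔ Int.fract ((k:ℝ) * α - b) < α) := by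
  obtain ⟨β, ⟨hβ0, hβ1⟩, rfl⟩ := hw
  refine ⟨β, hβ0, hβ1, fun k hk => ?_⟩
  rw [rotWord_getD _ _ _ hk]
  have hx0 : 0 ≤ Int.fract ((k:ℝ)*α) := Int.fract_nonneg _
  have hx1 : Int.fract ((k:ℝ)*α) < 1 := Int.fract_lt_one _
  have hfr : Int.fract ((k:ℝ)*α - β) = Int.fract (Int.fract ((k:ℝ)*α) - β) := by
    have h2 : (k:ℝ)*α - β = (Int.fract ((k:ℝ)*α) - β) + (⌊(k:ℝ)*α⌋ : ℤ) := by
      have := Int.floor_add_fract ((k:ℝ)*α); linarith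
    rw [h2, Int.fract_add_intCast]
  rw [hfr, ← inCirc_iff hα0 hα1 hβ0 hβ1 hx0 hx1]
  split
  · simp_all
  · simp_all

lemma infix_pair {x y : Bool} {r : List Bool} (h : [x, y] <:+: r) :
    ∃ j, j + 2 ≤ r.length ∧ r.getD j false = x ∧ r.getD (j+1) false = y := by
  obtain ⟨s, t, hst⟩ := h
  refine ⟨s.length, ?_, ?_, ?_⟩
  · rw [← hst]; simp
  · rw [← hst, List.getD_eq_getElem _ _ (by simp)]
    simp [List.getElem_append]
  · rw [← hst, List.getD_eq_getElem _ _ (by simp)]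
    simp [List.getElem_append]

lemma descr (n : ℕ) (r u v : List Bool) (α : ℝ)
    (hr : r.length = n + 1) (hα : α ∈ Set.Ioo (0:ℝ) (1/2 : ℝ))
    (hu : u ∈ St n α) (hv : v ∈ St n α) (hgen : Generates u v r)
    (h00 : [false, false] <:+: r) (h11 : [true, true] <:+: r) :
    ∀ k, k < n →
      if r.getD k false = true ∧ r.getD (k + 1) false = true then
        u.getD k false = false ∧ v.getD k false = false
      else
        u.getD k false = r.getD (k + 1) false ∧ v.getD k false = r.getD k false := by
  obtain ⟨hα0, hα2⟩ := hα
  have hα1 : α < 1 := by linarith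
  have hul : u.length = n := st_length hu
  obtain ⟨b, hb0, hb1, hub⟩ := st_spec hα0 hα1 hu
  obtain ⟨c, hc0, hc1, hvc⟩ := st_spec hα0 hα1 hv
  set δ : ℝ := Int.fract (c - b) with hδdef
  have hδ0 : 0 ≤ δ := Int.fract_nonneg _
  have hδ1 : δ < 1 := Int.fract_lt_one _
  have hu' : ∀ k, k < n → ((u.getD k false).toNat : ℤ)
      = if Int.fract ((k:ℝ)*α - b) < α then 1 else 0 := by
    intro k hk
    by_cases h : Int.fract ((k:ℝ)*α - b) < α
    · rw [(hub k hk).mpr h, if_pos h]; rfl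
    · rw [if_neg h]
      have hx : u.getD k false = false := by
        cases hx : u.getD k false
        · rfl
        · exact absurd ((hub k hk).mp hx) h
      rw [hx]; rfl
  have hv' : ∀ k, k < n → ((v.getD k false).toNat : ℤ)
      = if Int.fract ((k:ℝ)*α - c) < α then 1 else 0 := by
    intro k hk
    by_cases h : Int.fract ((k:ℝ)*α - c) < α
    · rw [(hvc k hk).mpr h, if_pos h]; rfl
    · rw [if_neg h]
      have hx : v.getD k false = false := by
        cases hx : v.getD k false
        · rfl
        · exact absurd ((hvc k hk).mp hx) h
      rw [hx]; rfl
  have hgen2 : ∀ k, k < n → ((r.getD (k+1) false).toNat : ℤ)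
      = ((r.getD k false).toNat : ℤ)
        + (if Int.fract ((k:ℝ)*α - b) < α then 1 else 0)
        - (if Int.fract ((k:ℝ)*α - c) < α then 1 else 0) := by
    intro k hk
    rw [← hu' k hk, ← hv' k hk]
    exact hgen k (by rw [hul]; exact hk)
  -- telescoped formula
  have hF : ∀ k, k < n → ((r.getD (k+1) false).toNat : ℤ)
      = ((r.getD 1 false).toNat : ℤ)
        + ((⌊(k:ℝ)*α - b⌋ - ⌊(k:ℝ)*α - c⌋) - (⌊(0:ℝ)*α - b⌋ - ⌊(0:ℝ)*α - c⌋)) := by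
    intro k
    induction k with
    | zero =>
        intro _
        push_cast
        ring
    | succ m ih =>
        intro hk
        have hm : m < n := by omega
        have e1 := hgen2 (m+1) hk
        push_cast at e1
        have e2 := ih hm
        have hb' := aux_floor_ind (((m:ℝ)+1)*α - b) α (le_of_lt hα0) hα1
        rw [show ((m:ℝ)+1)*α - b - α = (m:ℝ)*α - b by ring] at hb'
        have hc' := aux_floor_ind (((m:ℝ)+1)*α - c) α (le_of_lt hα0) hα1
        rw [show ((m:ℝ)+1)*α - c - α = (m:ℝ)*α - c by ring] at hc'
        push_cast
        rw [e1, e2, ← hb', ← hc']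
        ring
  have hG : ∀ t : ℝ, (⌊t - b⌋ - ⌊t - c⌋ : ℤ)
      = ⌊c - b⌋ + (if Int.fract (t - b) < δ then 1 else 0) := by
    intro t
    have h1 : t - c = ((t - b) - δ) - (⌊c - b⌋ : ℤ) := by
      have := Int.floor_add_fract (c - b); linarith
    rw [h1, Int.floor_sub_intCast]
    have h2 := aux_floor_ind (t - b) δ hδ0 hδ1
    linarith
  have hKey0 : ∀ k, k < n → ((r.getD (k+1) false).toNat : ℤ)
      = ((r.getD 1 false).toNat : ℤ)
        + ((if Int.fract ((k:ℝ)*α - b) < δ then 1 else 0)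
          - (if Int.fract ((0:ℝ)*α - b) < δ then 1 else 0)) := by
    intro k hk
    have h := hF k hk
    rw [hG ((k:ℝ)*α), hG ((0:ℝ)*α)] at h
    linarith
  -- occurrences of 11 and 00
  obtain ⟨j1, hj1len, hj1a, hj1b⟩ := infix_pair h11
  obtain ⟨j0, hj0len, hj0a, hj0b⟩ := infix_pair h00
  rw [hr] at hj1len hj0len
  have hj1n : j1 < n := by omega
  have hj0n : j0 < n := by omega
  -- pin down the additive constant
  have h1' := hKey0 j1 hj1n
  rw [hj1b] at h1'
  have h0' := hKey0 j0 hj0n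
  rw [hj0b] at h0'
  have hconst : ((r.getD 1 false).toNat : ℤ)
      = (if Int.fract ((0:ℝ)*α - b) < δ then 1 else 0) := by
    have hR1 : ((r.getD 1 false).toNat : ℤ) = 0 ∨ ((r.getD 1 false).toNat : ℤ) = 1 := by
      cases r.getD 1 false <;> simp
    by_cases hD0 : Int.fract ((0:ℝ)*α - b) < δ <;>
      by_cases hD1 : Int.fract ((j1:ℝ)*α - b) < δ <;>
      by_cases hD2 : Int.fract ((j0:ℝ)*α - b) < δ <;>
      simp only [hD0, hD1, hD2, if_true, if_false, if_pos, if_neg, not_false_iff,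
        Bool.toNat_true, Bool.toNat_false, Nat.cast_one, Nat.cast_zero] at h1' h0' ⊢ <;>
      try omega
  have hKiff : ∀ k, k < n →
      (r.getD (k+1) false = true ↔ Int.fract ((k:ℝ)*α - b) < δ) := by
    intro k hk
    have h := hKey0 k hk
    rw [hconst] at h
    have h' : ((r.getD (k+1) false).toNat : ℤ)
        = (if Int.fract ((k:ℝ)*α - b) < δ then 1 else 0) := by linarith
    constructor
    · intro hh
      rw [hh] at h'
      by_contra hno
      rw [if_neg hno] at h'
      simp at h'
    · intro hh
      rw [if_pos hh] at h'
      cases hx : r.getD (k+1) false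
      · rw [hx] at h'; simp at h'
      · rfl
  clear h1' h0' hconst hKey0 hF hG
  -- δ > α
  have hn0 : 0 < n := by omega
  have hδα : α < δ := by
    rcases j1 with _ | m
    · -- the 11 factor is at position 0
      have hI0 : Int.fract ((0:ℝ)*α - b) < δ := by
        have h2 := (hKiff 0 hn0).mp hj1b
        push_cast at h2
        exact h2
      have e0 := hgen2 0 hn0
      rw [hj1a, hj1b] at e0
      push_cast at e0
      by_cases hcb : Int.fract ((0:ℝ)*α - b) < α
      · have hcc : Int.fract ((0:ℝ)*α - c) < α := by
          by_contra hno
          rw [if_pos hcb, if_neg hno] at e0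
          simp at e0
        by_contra hno
        push_neg at hno
        have hp0 : 0 ≤ Int.fract ((0:ℝ)*α - b) := Int.fract_nonneg _
        have hfc : Int.fract ((0:ℝ)*α - c)
            = Int.fract ((0:ℝ)*α - b) + 1 - δ := by
          rw [aux_fract_sub _ b c, ← hδdef,
            aux_fract_neg (by linarith) (by linarith)]
          ring
        linarith
      · push_neg at hcb
        linarith
    · -- the 11 factor is at position m+1
      have h1 : Int.fract ((m:ℝ)*α - b) < δ := (hKiff m (by omega)).mp hj1a
      have h2 : Int.fract (((m+1:ℕ):ℝ)*α - b) < δ := (hKiff (m+1) (by omega)).mp hj1b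
      push_cast at h2
      rw [show ((m:ℝ)+1)*α - b = ((m:ℝ)*α - b) + α by ring, aux_fract_shift] at h2
      have hp0 : 0 ≤ Int.fract ((m:ℝ)*α - b) := Int.fract_nonneg _
      have hp1 : Int.fract ((m:ℝ)*α - b) < 1 := Int.fract_lt_one _
      rcases lt_or_ge (Int.fract ((m:ℝ)*α - b) + α) 1 with hc2 | hc2
      · rw [aux_fract_Ico (by linarith) hc2] at h2
        linarith
      · rw [aux_fract_hi (by linarith) (by linarith)] at h2
        linarith
  -- δ < 1 - α
  have hδ1α : δ < 1 - α := by
    rcases j0 with _ | m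
    · have hI0 : ¬ Int.fract ((0:ℝ)*α - b) < δ := by
        intro hh
        have h2 := (hKiff 0 hn0).mpr (by push_cast; exact hh)
        rw [hj0b] at h2
        exact Bool.false_ne_true h2
      push_neg at hI0
      have e0 := hgen2 0 hn0
      rw [hj0a, hj0b] at e0
      push_cast at e0
      by_cases hcb : Int.fract ((0:ℝ)*α - b) < α
      · linarith
      · have hcc : ¬ Int.fract ((0:ℝ)*α - c) < α := by
          intro hno
          rw [if_neg hcb, if_pos hno] at e0
          simp at e0
        push_neg at hcb hcc
        by_contra hno
        push_neg at hno
        have hp1 : Int.fract ((0:ℝ)*α - b) < 1 := Int.fract_lt_one _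
        have hfc : Int.fract ((0:ℝ)*α - c)
            = Int.fract ((0:ℝ)*α - b) - δ := by
          rw [aux_fract_sub _ b c, ← hδdef,
            aux_fract_Ico (by linarith) (by linarith)]
        linarith
    · have h1 : ¬ Int.fract ((m:ℝ)*α - b) < δ := by
        intro hh
        have := (hKiff m (by omega)).mpr hh
        rw [hj0a] at this
        exact Bool.false_ne_true this
      have h2 : ¬ Int.fract (((m+1:ℕ):ℝ)*α - b) < δ := by
        intro hh
        have := (hKiff (m+1) (by omega)).mpr hh
        rw [hj0b] at this
        exact Bool.false_ne_true this
      push_neg at h1 h2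
      push_cast at h2
      rw [show ((m:ℝ)+1)*α - b = ((m:ℝ)*α - b) + α by ring, aux_fract_shift] at h2
      have hp0 : 0 ≤ Int.fract ((m:ℝ)*α - b) := Int.fract_nonneg _
      have hp1 : Int.fract ((m:ℝ)*α - b) < 1 := Int.fract_lt_one _
      rcases lt_or_ge (Int.fract ((m:ℝ)*α - b) + α) 1 with hc2 | hc2
      · linarith
      · rw [aux_fract_hi (by linarith) (by linarith)] at h2
        linarith
  -- never u_k = v_k = 1
  have hnb : ∀ k, k < n → ¬(u.getD k false = true ∧ v.getD k false = true) := by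
    rintro k hk ⟨hx, hy⟩
    have hpb := (hub k hk).mp hx
    have hpc := (hvc k hk).mp hy
    have hp0 : 0 ≤ Int.fract ((k:ℝ)*α - b) := Int.fract_nonneg _
    have hfc : Int.fract ((k:ℝ)*α - c) = Int.fract ((k:ℝ)*α - b) + 1 - δ := by
      rw [aux_fract_sub _ b c, ← hδdef,
        aux_fract_neg (by linarith) (by linarith)]
      ring
    linarith
  -- conclusion
  intro k hk
  have E := hgen k (by rw [hul]; exact hk)
  have NB := hnb k hk
  clear hKiff hgen2 hu' hv' hub hvc hnb hgen
  by_cases hcond : r.getD k false = true ∧ r.getD (k + 1) false = true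
  · rw [if_pos hcond]
    obtain ⟨hc1', hc2'⟩ := hcond
    rw [hc1', hc2'] at E
    cases hx : u.getD k false <;> cases hy : v.getD k false <;>
      simp only [hx, hy, hc1', hc2', Bool.toNat_true, Bool.toNat_false, Nat.cast_one,
        Nat.cast_zero, eq_self_iff_true, and_self, not_true, true_and, and_true] at E NB ⊢ <;>
      omega
  · rw [if_neg hcond]
    cases hrk : r.getD k false <;> cases hrk1 : r.getD (k+1) false <;>
      cases hx : u.getD k false <;> cases hy : v.getD k false <;>
      simp only [hx, hy, hrk, hrk1, Bool.toNat_true, Bool.toNat_false, Nat.cast_one,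
        Nat.cast_zero, eq_self_iff_true, and_self, not_true, true_and, and_true] at E NB ⊢ <;>
      first
        | omega
        | exact absurd ⟨hrk, hrk1⟩ hcond

/-- If a word `r` of length `n+1` contains both `00` and `11` as factors and is
generated by a pair `(u,v)` of Sturmian words of a common slope `α ∈ (0,1/2)`,
then `(u,v)` is uniquely determined by `r`: for every `0 ≤ k ≤ n-1`, if
`r_k = r_{k+1} = 1` then `u_k = v_k = 0`, and otherwise `u_k = r_{k+1}` and
`v_k = r_k`; in particular `r` is generated by exactly one such pair. -/
theorem unique_pair_of_00_and_11 (n : ℕ) (r u v : List Bool) (α : ℝ)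
    (hr : r.length = n + 1) (hα : α ∈ Set.Ioo (0:ℝ) (1/2 : ℝ))
    (hu : u ∈ St n α) (hv : v ∈ St n α) (hgen : Generates u v r)
    (h00 : [false, false] <:+: r) (h11 : [true, true] <:+: r) :
    (∀ k, k < n →
      if r.getD k false = true ∧ r.getD (k + 1) false = true then
        u.getD k false = false ∧ v.getD k false = false
      else
        u.getD k false = r.getD (k + 1) false ∧ v.getD k false = r.getD k false) ∧
    ∀ u' v' : List Bool, ∀ α' : ℝ, α' ∈ Set.Ioo (0:ℝ) (1/2 : ℝ) →
      u' ∈ St n α' → v' ∈ St n α' → Generates u' v' r → u' = u ∧ v' = v := by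
  have P := descr n r u v α hr hα hu hv hgen h00 h11
  refine ⟨P, ?_⟩
  intro u' v' α' hα' hu' hv' hgen'
  have P' := descr n r u' v' α' hr hα' hu' hv' hgen' h00 h11
  constructor
  · apply List.ext_getElem (by rw [st_length hu', st_length hu])
    intro i h1 h2
    have hi : i < n := by rw [st_length hu'] at h1; exact h1
    have Q := P i hi
    have Q' := P' i hi
    rw [← List.getD_eq_getElem u' false h1, ← List.getD_eq_getElem u false h2]
    by_cases hc : r.getD i false = true ∧ r.getD (i + 1) false = true
    · rw [if_pos hc] at Q Q'
      rw [Q.1, Q'.1]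
    · rw [if_neg hc] at Q Q'
      rw [Q.1, Q'.1]
  · apply List.ext_getElem (by rw [st_length hv', st_length hv])
    intro i h1 h2
    have hi : i < n := by rw [st_length hv'] at h1; exact h1
    have Q := P i hi
    have Q' := P' i hi
    rw [← List.getD_eq_getElem v' false h1, ← List.getD_eq_getElem v false h2]
    by_cases hc : r.getD i false = true ∧ r.getD (i + 1) false = true
    · rw [if_pos hc] at Q Q'
      rw [Q.2, Q'.2]
    · rw [if_neg hc] at Q Q'
      rw [Q.2, Q'.2]
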